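/- For every integer d ≥ 3, M(d) = 2·N⁺(d) + 2·N⁻(d) + 4 + δ(d), where δ(d) = 1 if d is even and δ(d) = 0 if d is odd. -/

import Mathlib

/-- A pair of integers `(a, b)` is multiplicatively dependent: `ab ≠ 0` and
there is a nonzero pair of integer exponents `(k₁, k₂)` with `a^k₁ * b^k₂ = 1`
(evaluated in `ℚ`). -/
def MultDepPair (a b : ℤ) : Prop :=
  a * b ≠ 0 ∧ ∃ k : ℤ × ℤ, k ≠ 0 ∧ (a : ℚ) ^ k.1 * (b : ℚ) ^ k.2 = 1

/-- `MSet d` is the set of multiplicatively dependent pairs `(a, b) ∈ ℤ²`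
with difference `b - a = d`. -/
def MSet (d : ℤ) : Set (ℤ × ℤ) :=
  {p | MultDepPair p.1 p.2 ∧ p.2 - p.1 = d}

/-- `M d` is the number of multiplicatively dependent pairs with difference `d`. -/
noncomputable def M (d : ℤ) : ℕ := (MSet d).ncard

/-- `g` is a perfect power: `g = a ^ k` with `a ≥ 2`, `k ≥ 2`. -/
def IsPerfectPow (g : ℕ) : Prop := ∃ a k : ℕ, 2 ≤ a ∧ 2 ≤ k ∧ g = a ^ k

/-- `Nplus d` is the number of primitive solutions `(g, x, y)` of `g^y + g^x = d`
with `g ≥ 2` not a perfect power and `y > x ≥ 1`. -/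
noncomputable def Nplus (d : ℕ) : ℕ :=
  {T : ℕ × ℕ × ℕ | 2 ≤ T.1 ∧ 1 ≤ T.2.1 ∧ T.2.1 < T.2.2 ∧ ¬ IsPerfectPow T.1 ∧
    T.1 ^ T.2.2 + T.1 ^ T.2.1 = d}.ncard

/-- `Nminus d` is the number of primitive solutions `(g, x, y)` of `g^y - g^x = d`
with `g ≥ 2` not a perfect power and `y > x ≥ 1`. -/
noncomputable def Nminus (d : ℕ) : ℕ :=
  {T : ℕ × ℕ × ℕ | 2 ≤ T.1 ∧ 1 ≤ T.2.1 ∧ T.2.1 < T.2.2 ∧ ¬ IsPerfectPow T.1 ∧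
    T.1 ^ T.2.2 = T.1 ^ T.2.1 + d}.ncard


lemma pp_exists : ∀ n : ℕ, 2 ≤ n → ∃ g k, 2 ≤ g ∧ 1 ≤ k ∧ ¬ IsPerfectPow g ∧ n = g ^ k := by
  intro n
  induction n using Nat.strong_induction_on with
  | _ n ih =>
    intro hn
    by_cases hp : IsPerfectPow n
    · obtain ⟨a, k, ha, hk, rfl⟩ := hp
      have halt : a < a ^ k := lt_self_pow₀ (by omega) (by omega)
      obtain ⟨g, j, hg, hj, hgp, hae⟩ := ih a halt ha
      exact ⟨g, j * k, hg, Nat.one_le_iff_ne_zero.2 (Nat.mul_ne_zero (by omega) (by omega)),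
        hgp, by rw [hae, pow_mul]⟩
    · exact ⟨n, 1, hn, le_refl 1, hp, (pow_one n).symm⟩

lemma nat_coprime_pow_eq {a b m n : ℕ} (ha : 1 ≤ a) (hb : 1 ≤ b) (hm : 1 ≤ m) (hn : 1 ≤ n)
    (hmn : Nat.Coprime m n) (h : a ^ m = b ^ n) : ∃ c : ℕ, a = c ^ n ∧ b = c ^ m := by
  have hq : (a : ℚ) ^ m = (b : ℚ) ^ n := by exact_mod_cast congrArg (Nat.cast (R := ℚ)) h
  obtain ⟨c, hca, hcb⟩ := (pow_eq_pow_iff_of_coprime hmn).1 hq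
  have hca' : (a : ℚ) = |c| ^ n := by rw [← abs_pow, ← hca, Nat.abs_cast]
  have hcb' : (b : ℚ) = |c| ^ m := by rw [← abs_pow, ← hcb, Nat.abs_cast]
  have hden : (|c|).den = 1 := by
    have h1 : ((|c|) ^ n).den = 1 := by rw [← hca']; exact Rat.den_natCast a
    rw [Rat.den_pow] at h1
    have h2 := Nat.le_self_pow (show n ≠ 0 by omega) (|c|).den
    have h3 := (|c|).den_pos
    omega
  have hnum : (0:ℤ) ≤ (|c|).num := Rat.num_nonneg.2 (abs_nonneg c)
  have hc0 : ((|c|).num : ℚ) = |c| := Rat.coe_int_num_of_den_eq_one hden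
  have hc' : |c| = (((|c|).num.toNat : ℕ) : ℚ) := by
    conv_lhs => rw [← hc0]
    exact_mod_cast congrArg (fun z : ℤ => (z : ℚ)) (Int.toNat_of_nonneg hnum).symm
  rw [hc'] at hca' hcb'
  exact ⟨(|c|).num.toNat, by exact_mod_cast hca', by exact_mod_cast hcb'⟩

lemma prim_eq {g h x y : ℕ} (hg : 2 ≤ g) (hh : 2 ≤ h) (hx : 1 ≤ x) (hy : 1 ≤ y)
    (hgp : ¬ IsPerfectPow g) (hhp : ¬ IsPerfectPow h) (heq : g ^ x = h ^ y) :
    g = h ∧ x = y := by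
  have hepos : 0 < Nat.gcd x y := Nat.gcd_pos_of_pos_left y (by omega)
  have hcop : Nat.Coprime (x / Nat.gcd x y) (y / Nat.gcd x y) :=
    Nat.coprime_div_gcd_div_gcd hepos
  set e := Nat.gcd x y with he
  set x' := x / e with hxd
  set y' := y / e with hyd
  have hx' : x = e * x' := (Nat.mul_div_cancel' (Nat.gcd_dvd_left x y)).symm
  have hy' : y = e * y' := (Nat.mul_div_cancel' (Nat.gcd_dvd_right x y)).symm
  have hx'1 : 1 ≤ x' := Nat.one_le_iff_ne_zero.2 (by rintro h0; rw [h0, mul_zero] at hx'; omega)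
  have hy'1 : 1 ≤ y' := Nat.one_le_iff_ne_zero.2 (by rintro h0; rw [h0, mul_zero] at hy'; omega)
  have heq2 : (g ^ x') ^ e = (h ^ y') ^ e := by
    rw [← pow_mul, ← pow_mul, mul_comm x' e, mul_comm y' e, ← hx', ← hy', heq]
  have heq3 : g ^ x' = h ^ y' := Nat.pow_left_injective (by omega) heq2
  obtain ⟨c, hcg, hch⟩ := nat_coprime_pow_eq (by omega) (by omega) hx'1 hy'1 hcop heq3
  have hc2 : 2 ≤ c := by
    by_contra hcl
    have h1 : c ≤ 1 := by omega
    have := Nat.pow_le_pow_left h1 y'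
    rw [← hcg, one_pow] at this
    omega
  have hy'one : y' = 1 := by
    by_contra hne
    exact hgp ⟨c, y', hc2, by omega, hcg⟩
  have hx'one : x' = 1 := by
    by_contra hne
    exact hhp ⟨c, x', hc2, by omega, hch⟩
  rw [hy'one, pow_one] at hcg
  rw [hx'one, pow_one] at hch
  rw [hx'one, mul_one] at hx'
  rw [hy'one, mul_one] at hy'
  exact ⟨hcg.trans hch.symm, by omega⟩

lemma multdep_two {a b : ℤ} (ha : 2 ≤ a.natAbs) (hb : 2 ≤ b.natAbs) (h : MultDepPair a b) :
    ∃ m n : ℕ, 1 ≤ m ∧ 1 ≤ n ∧ a.natAbs ^ m = b.natAbs ^ n := by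
  obtain ⟨-, k, hk, he⟩ := h
  set A : ℚ := (a.natAbs : ℚ) with hA
  set B : ℚ := (b.natAbs : ℚ) with hB
  have hA1 : 1 < A := by rw [hA]; exact_mod_cast ha
  have hB1 : 1 < B := by rw [hB]; exact_mod_cast hb
  have habs : A ^ k.1 * B ^ k.2 = 1 := by
    have := congrArg (fun q : ℚ => |q|) he
    have hza : |(a:ℚ) ^ k.1| = |(a:ℚ)| ^ k.1 := map_zpow₀ (absHom (α := ℚ)) _ _
    have hzb : |(b:ℚ) ^ k.2| = |(b:ℚ)| ^ k.2 := map_zpow₀ (absHom (α := ℚ)) _ _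
    simp only [abs_mul, hza, hzb, abs_one] at this
    rw [hA, hB, Nat.cast_natAbs, Nat.cast_natAbs, Int.cast_abs, Int.cast_abs]
    exact this
  have hk1 : k.1 ≠ 0 := by
    rintro h0
    rw [h0, zpow_zero, one_mul] at habs
    have hk2 : k.2 = 0 := (zpow_eq_one_iff_right₀ (by positivity) (by linarith)).1 habs
    exact hk (Prod.ext h0 hk2)
  have key : A ^ k.1 = B ^ (-k.2) := by
    rw [zpow_neg]
    exact eq_inv_of_mul_eq_one_left habs
  rcases lt_trichotomy k.1 0 with hneg | h0 | hpos
  · -- A ^ k.1 < 1, so B ^ (-k.2) < 1, so -k.2 < 0, so k.2 > 0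
    have h1 : A ^ k.1 < 1 := by
      have := zpow_right_strictMono₀ hA1 hneg
      simpa using this
    have h2 : (-k.2) < 0 := by
      by_contra hc
      push_neg at hc
      have : (1:ℚ) ≤ B ^ (-k.2) := one_le_zpow₀ (le_of_lt hB1) hc
      rw [← key] at this; linarith
    refine ⟨(-k.1).toNat, k.2.toNat, by omega, by omega, ?_⟩
    have hkey2 : A ^ (-k.1) = B ^ k.2 := by rw [zpow_neg, key, ← zpow_neg, neg_neg]
    have : A ^ ((-k.1).toNat : ℤ) = B ^ (k.2.toNat : ℤ) := by
      rw [Int.toNat_of_nonneg (by omega), Int.toNat_of_nonneg (by omega)]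
      exact hkey2
    rw [zpow_natCast, zpow_natCast, hA, hB] at this
    exact_mod_cast this
  · exact absurd h0 hk1
  · have h1 : 1 < A ^ k.1 := one_lt_zpow₀ hA1 hpos
    have h2 : 0 < (-k.2) := by
      by_contra hc
      push_neg at hc
      have : B ^ (-k.2) ≤ 1 := zpow_le_one_of_nonpos₀ (le_of_lt hB1) hc
      rw [← key] at this; linarith
    refine ⟨k.1.toNat, (-k.2).toNat, by omega, by omega, ?_⟩
    have : A ^ (k.1.toNat : ℤ) = B ^ ((-k.2).toNat : ℤ) := by
      rw [Int.toNat_of_nonneg (by omega), Int.toNat_of_nonneg (by omega)]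
      exact key
    rw [zpow_natCast, zpow_natCast, hA, hB] at this
    exact_mod_cast this

lemma multdep_of_pows {a b : ℤ} {g x y : ℕ} (ha0 : a ≠ 0) (hb0 : b ≠ 0) (hg : 2 ≤ g)
    (hA : a.natAbs = g ^ x) (hB : b.natAbs = g ^ y) (hy : 1 ≤ y) :
    MultDepPair a b := by
  have hgq : (g:ℚ) ≠ 0 := by positivity
  have ha2 : (a:ℚ) ^ 2 = ((g:ℚ) ^ x) ^ 2 := by
    have h1 : ((a.natAbs : ℕ) : ℚ) = (g:ℚ) ^ x := by exact_mod_cast congrArg (Nat.cast (R := ℚ)) hA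
    rw [Nat.cast_natAbs, Int.cast_abs] at h1
    rw [← h1, sq_abs]
  have hb2 : (b:ℚ) ^ 2 = ((g:ℚ) ^ y) ^ 2 := by
    have h1 : ((b.natAbs : ℕ) : ℚ) = (g:ℚ) ^ y := by exact_mod_cast congrArg (Nat.cast (R := ℚ)) hB
    rw [Nat.cast_natAbs, Int.cast_abs] at h1
    rw [← h1, sq_abs]
  refine ⟨mul_ne_zero ha0 hb0, ⟨((2*y : ℕ) : ℤ), -((2*x : ℕ) : ℤ)⟩, ?_, ?_⟩
  · simp only [ne_eq, Prod.ext_iff, Prod.fst_zero, Prod.snd_zero, not_and]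
    intro hcon
    exfalso
    have : (2*y : ℕ) = 0 := by exact_mod_cast hcon
    omega
  · show (a:ℚ) ^ ((2*y : ℕ) : ℤ) * (b:ℚ) ^ (-((2*x : ℕ) : ℤ)) = 1
    rw [zpow_neg, zpow_natCast, zpow_natCast]
    rw [pow_mul, pow_mul]
    rw [ha2, hb2, ← pow_mul, ← pow_mul, ← pow_mul, ← pow_mul]
    rw [show x*(2*y) = y*(2*x) by ring]
    exact mul_inv_cancel₀ (pow_ne_zero _ hgq)

lemma multdep_iff (a b : ℤ) :
    MultDepPair a b ↔ a ≠ 0 ∧ b ≠ 0 ∧ (a.natAbs = 1 ∨ b.natAbs = 1 ∨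
      ∃ g x y : ℕ, 2 ≤ g ∧ 1 ≤ x ∧ 1 ≤ y ∧ ¬ IsPerfectPow g ∧
        a.natAbs = g ^ x ∧ b.natAbs = g ^ y) := by
  constructor
  · intro h
    have ha0 : a ≠ 0 := fun h0 => h.1 (by rw [h0, zero_mul])
    have hb0 : b ≠ 0 := fun h0 => h.1 (by rw [h0, mul_zero])
    refine ⟨ha0, hb0, ?_⟩
    by_cases ha1 : a.natAbs = 1
    · exact Or.inl ha1
    by_cases hb1 : b.natAbs = 1
    · exact Or.inr (Or.inl hb1)
    have ha2 : 2 ≤ a.natAbs := by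
      have := Int.natAbs_ne_zero.2 ha0; omega
    have hb2 : 2 ≤ b.natAbs := by
      have := Int.natAbs_ne_zero.2 hb0; omega
    obtain ⟨m, n, hm, hn, heq⟩ := multdep_two ha2 hb2 h
    obtain ⟨g, s, hg, hs, hgp, hga⟩ := pp_exists a.natAbs ha2
    obtain ⟨h', t, hh, ht, hhp, hhb⟩ := pp_exists b.natAbs hb2
    have heq2 : g ^ (s * m) = h' ^ (t * n) := by
      rw [pow_mul, pow_mul, ← hga, ← hhb, heq]
    obtain ⟨rfl, -⟩ := prim_eq hg hh
      (Nat.one_le_iff_ne_zero.2 (Nat.mul_ne_zero (by omega) (by omega)))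
      (Nat.one_le_iff_ne_zero.2 (Nat.mul_ne_zero (by omega) (by omega))) hgp hhp heq2
    exact Or.inr (Or.inr ⟨g, s, t, hg, hs, ht, hgp, hga, hhb⟩)
  · rintro ⟨ha0, hb0, ha1 | hb1 | ⟨g, x, y, hg, hx, hy, hgp, hA, hB⟩⟩
    · refine ⟨mul_ne_zero ha0 hb0, ⟨2, 0⟩, by simp, ?_⟩
      show (a:ℚ) ^ (2:ℤ) * (b:ℚ) ^ (0:ℤ) = 1
      have : a = 1 ∨ a = -1 := Int.natAbs_eq_iff.1 ha1 |>.imp (by simp) (by simp)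
      rcases this with rfl | rfl <;> norm_num
    · refine ⟨mul_ne_zero ha0 hb0, ⟨0, 2⟩, by simp, ?_⟩
      show (a:ℚ) ^ (0:ℤ) * (b:ℚ) ^ (2:ℤ) = 1
      have : b = 1 ∨ b = -1 := Int.natAbs_eq_iff.1 hb1 |>.imp (by simp) (by simp)
      rcases this with rfl | rfl <;> norm_num
    · exact multdep_of_pows ha0 hb0 hg hA hB hy

def SPset (d : ℕ) : Set (ℕ × ℕ × ℕ) :=
  {T : ℕ × ℕ × ℕ | 2 ≤ T.1 ∧ 1 ≤ T.2.1 ∧ T.2.1 < T.2.2 ∧ ¬ IsPerfectPow T.1 ∧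
    T.1 ^ T.2.2 + T.1 ^ T.2.1 = d}

def SMset (d : ℕ) : Set (ℕ × ℕ × ℕ) :=
  {T : ℕ × ℕ × ℕ | 2 ≤ T.1 ∧ 1 ≤ T.2.1 ∧ T.2.1 < T.2.2 ∧ ¬ IsPerfectPow T.1 ∧
    T.1 ^ T.2.2 = T.1 ^ T.2.1 + d}

def f1 (T : ℕ × ℕ × ℕ) : ℤ × ℤ := (((T.1 ^ T.2.1 : ℕ) : ℤ), ((T.1 ^ T.2.2 : ℕ) : ℤ))

def f2 (T : ℕ × ℕ × ℕ) : ℤ × ℤ := (-((T.1 ^ T.2.2 : ℕ) : ℤ), -((T.1 ^ T.2.1 : ℕ) : ℤ))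

def f3 (T : ℕ × ℕ × ℕ) : ℤ × ℤ := (-((T.1 ^ T.2.1 : ℕ) : ℤ), ((T.1 ^ T.2.2 : ℕ) : ℤ))

def f4 (T : ℕ × ℕ × ℕ) : ℤ × ℤ := (-((T.1 ^ T.2.2 : ℕ) : ℤ), ((T.1 ^ T.2.1 : ℕ) : ℤ))

def Aset (d : ℕ) : Set (ℤ × ℤ) :=
  {(1, (d:ℤ)+1), (-1, (d:ℤ)-1), (1-(d:ℤ), 1), (-1-(d:ℤ), -1)}

def Eset (d : ℕ) : Set (ℤ × ℤ) :=
  if Even d then {(-((d/2 : ℕ) : ℤ), ((d/2 : ℕ) : ℤ))} else ∅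

lemma SP_bound {d : ℕ} {T : ℕ × ℕ × ℕ} (hT : T ∈ SPset d) :
    T.1 ≤ d ∧ T.2.1 ≤ d ∧ T.2.2 ≤ d := by
  obtain ⟨hg, hx, hxy, -, he⟩ := hT
  have h1 : T.1 ≤ T.1 ^ T.2.2 := Nat.le_self_pow (by omega) _
  have h2 : T.2.2 < 2 ^ T.2.2 := Nat.lt_two_pow_self
  have h3 : 2 ^ T.2.2 ≤ T.1 ^ T.2.2 := Nat.pow_le_pow_left hg _
  omega

lemma SM_bound {d : ℕ} {T : ℕ × ℕ × ℕ} (hT : T ∈ SMset d) :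
    T.1 ≤ d ∧ T.2.1 ≤ d ∧ T.2.2 ≤ d := by
  obtain ⟨hg, hx, hxy, -, he⟩ := hT
  obtain ⟨g, x, y⟩ := T
  simp only at *
  have h1 : g ^ x ≤ g ^ (y-1) := Nat.pow_le_pow_right (by omega) (by omega)
  have h2 : g ^ y = g ^ (y-1) * g := by rw [← pow_succ]; congr 1; omega
  have h3 : g ^ (y-1) * 2 ≤ g ^ (y-1) * g := Nat.mul_le_mul_left _ hg
  have h4 : g ^ (y-1) ≤ d := by omega
  have h5 : g ≤ g ^ (y-1) := Nat.le_self_pow (by omega) _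
  have h6 : y - 1 < 2 ^ (y-1) := Nat.lt_two_pow_self
  have h7 : 2 ^ (y-1) ≤ g ^ (y-1) := Nat.pow_le_pow_left hg _
  omega

lemma SP_finite (d : ℕ) : (SPset d).Finite := by
  apply Set.Finite.subset (Set.finite_Icc ((0,0,0) : ℕ×ℕ×ℕ) (d,d,d))
  intro T hT
  have := SP_bound hT
  simp [Set.mem_Icc, Prod.le_def]
  omega

lemma SM_finite (d : ℕ) : (SMset d).Finite := by
  apply Set.Finite.subset (Set.finite_Icc ((0,0,0) : ℕ×ℕ×ℕ) (d,d,d))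
  intro T hT
  have := SM_bound hT
  simp [Set.mem_Icc, Prod.le_def]
  omega

lemma pows_inj {g h x y : ℕ} (hg : 2 ≤ g) (hh : 2 ≤ h) (hx : 1 ≤ x) (hy : 1 ≤ y)
    (hgp : ¬ IsPerfectPow g) (hhp : ¬ IsPerfectPow h)
    (heq : ((g ^ x : ℕ) : ℤ) = ((h ^ y : ℕ) : ℤ)) : g = h ∧ x = y :=
  prim_eq hg hh hx hy hgp hhp (by exact_mod_cast heq)

lemma f1_inj {d : ℕ} : Set.InjOn f1 (SMset d) := by
  rintro ⟨g, x, y⟩ hT ⟨h, u, v⟩ hU heq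
  obtain ⟨hg, hx, hxy, hgp, -⟩ : 2 ≤ g ∧ 1 ≤ x ∧ x < y ∧ ¬ IsPerfectPow g ∧ g ^ y = g ^ x + d := hT
  obtain ⟨hh, hu, huv, hhp, -⟩ : 2 ≤ h ∧ 1 ≤ u ∧ u < v ∧ ¬ IsPerfectPow h ∧ h ^ v = h ^ u + d := hU
  have h1 : ((g^x:ℕ):ℤ) = ((h^u:ℕ):ℤ) := congrArg Prod.fst heq
  have h2 : ((g^y:ℕ):ℤ) = ((h^v:ℕ):ℤ) := congrArg Prod.snd heq
  obtain ⟨rfl, rfl⟩ := pows_inj hg hh hx hu hgp hhp h1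
  obtain ⟨-, rfl⟩ := pows_inj hg hg (show 1 ≤ y by omega) (show 1 ≤ v by omega) hgp hgp h2
  rfl

lemma f2_inj {d : ℕ} : Set.InjOn f2 (SMset d) := by
  rintro ⟨g, x, y⟩ hT ⟨h, u, v⟩ hU heq
  obtain ⟨hg, hx, hxy, hgp, -⟩ : 2 ≤ g ∧ 1 ≤ x ∧ x < y ∧ ¬ IsPerfectPow g ∧ g ^ y = g ^ x + d := hT
  obtain ⟨hh, hu, huv, hhp, -⟩ : 2 ≤ h ∧ 1 ≤ u ∧ u < v ∧ ¬ IsPerfectPow h ∧ h ^ v = h ^ u + d := hU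
  have h1 : (-(g^y:ℕ):ℤ) = (-(h^v:ℕ):ℤ) := congrArg Prod.fst heq
  have h2 : (-(g^x:ℕ):ℤ) = (-(h^u:ℕ):ℤ) := congrArg Prod.snd heq
  rw [neg_inj] at h1 h2
  obtain ⟨rfl, rfl⟩ := pows_inj hg hh (show 1 ≤ y by omega) (show 1 ≤ v by omega) hgp hhp h1
  obtain ⟨-, rfl⟩ := pows_inj hg hg hx hu hgp hgp h2
  rfl

lemma f3_inj {d : ℕ} : Set.InjOn f3 (SPset d) := by
  rintro ⟨g, x, y⟩ hT ⟨h, u, v⟩ hU heq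
  obtain ⟨hg, hx, hxy, hgp, -⟩ : 2 ≤ g ∧ 1 ≤ x ∧ x < y ∧ ¬ IsPerfectPow g ∧ g ^ y + g ^ x = d := hT
  obtain ⟨hh, hu, huv, hhp, -⟩ : 2 ≤ h ∧ 1 ≤ u ∧ u < v ∧ ¬ IsPerfectPow h ∧ h ^ v + h ^ u = d := hU
  have h1 : (-(g^x:ℕ):ℤ) = (-(h^u:ℕ):ℤ) := congrArg Prod.fst heq
  have h2 : ((g^y:ℕ):ℤ) = ((h^v:ℕ):ℤ) := congrArg Prod.snd heq
  rw [neg_inj] at h1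
  obtain ⟨rfl, rfl⟩ := pows_inj hg hh hx hu hgp hhp h1
  obtain ⟨-, rfl⟩ := pows_inj hg hg (show 1 ≤ y by omega) (show 1 ≤ v by omega) hgp hgp h2
  rfl

lemma f4_inj {d : ℕ} : Set.InjOn f4 (SPset d) := by
  rintro ⟨g, x, y⟩ hT ⟨h, u, v⟩ hU heq
  obtain ⟨hg, hx, hxy, hgp, -⟩ : 2 ≤ g ∧ 1 ≤ x ∧ x < y ∧ ¬ IsPerfectPow g ∧ g ^ y + g ^ x = d := hT
  obtain ⟨hh, hu, huv, hhp, -⟩ : 2 ≤ h ∧ 1 ≤ u ∧ u < v ∧ ¬ IsPerfectPow h ∧ h ^ v + h ^ u = d := hU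
  have h1 : (-(g^y:ℕ):ℤ) = (-(h^v:ℕ):ℤ) := congrArg Prod.fst heq
  have h2 : ((g^x:ℕ):ℤ) = ((h^u:ℕ):ℤ) := congrArg Prod.snd heq
  rw [neg_inj] at h1
  obtain ⟨rfl, rfl⟩ := pows_inj hg hh (show 1 ≤ y by omega) (show 1 ≤ v by omega) hgp hhp h1
  obtain ⟨-, rfl⟩ := pows_inj hg hg hx hu hgp hgp h2
  rfl

def Rest (d : ℕ) : Set (ℤ × ℤ) :=
  f1 '' SMset d ∪ (f2 '' SMset d ∪ (f3 '' SPset d ∪ (f4 '' SPset d ∪ Eset d)))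

lemma pow_ge {g x : ℕ} (hg : 2 ≤ g) (hx : 1 ≤ x) : 2 ≤ g ^ x :=
  le_trans hg (Nat.le_self_pow (by omega) _)

lemma MSet_eq (d : ℕ) (hd : 3 ≤ d) : MSet (d:ℤ) = Aset d ∪ Rest d := by
  ext ⟨a, b⟩
  simp only [MSet, Set.mem_setOf_eq, Set.mem_union]
  constructor
  · rintro ⟨hdep, hdiff⟩
    rw [multdep_iff] at hdep
    obtain ⟨ha0, hb0, hcase⟩ := hdep
    rcases hcase with ha1 | hb1 | ⟨g, x, y, hg, hx, hy, hgp, hA, hB⟩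
    · left
      rcases Int.natAbs_eq_iff.1 ha1 with rfl | rfl
      · simp only [Aset, Set.mem_insert_iff, Set.mem_singleton_iff, Prod.ext_iff]
        left; constructor <;> omega
      · simp only [Aset, Set.mem_insert_iff, Set.mem_singleton_iff, Prod.ext_iff]
        right; left; constructor <;> omega
    · left
      rcases Int.natAbs_eq_iff.1 hb1 with rfl | rfl
      · simp only [Aset, Set.mem_insert_iff, Set.mem_singleton_iff, Prod.ext_iff]
        right; right; left; constructor <;> omega
      · simp only [Aset, Set.mem_insert_iff, Set.mem_singleton_iff, Prod.ext_iff]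
        right; right; right; constructor <;> omega
    · right
      have hgx1 : 1 ≤ g ^ x := Nat.one_le_pow _ _ (by omega)
      have hgy1 : 1 ≤ g ^ y := Nat.one_le_pow _ _ (by omega)
      rcases Int.natAbs_eq_iff.1 hA with rfl | rfl <;>
        rcases Int.natAbs_eq_iff.1 hB with rfl | rfl
      · -- (+,+) : f1
        have hN : g ^ y = g ^ x + d := by omega
        have hxy : x < y := (Nat.pow_lt_pow_iff_right (by omega : 1 < g)).1 (by omega)
        exact Or.inl ⟨(g, x, y), ⟨hg, hx, hxy, hgp, hN⟩, rfl⟩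
      · -- (+,-) : impossible
        exfalso; omega
      · -- (-,+)
        have hN : g ^ y + g ^ x = d := by omega
        rcases lt_trichotomy x y with hxy | rfl | hyx
        · exact Or.inr (Or.inr (Or.inl ⟨(g, x, y), ⟨hg, hx, hxy, hgp, hN⟩, rfl⟩))
        · -- x = y : Eset
          refine Or.inr (Or.inr (Or.inr (Or.inr ?_)))
          have hev : Even d := ⟨g ^ x, by omega⟩
          simp only [Eset, if_pos hev, Set.mem_singleton_iff, Prod.ext_iff]
          constructor <;> [skip; skip] <;> omega
        · exact Or.inr (Or.inr (Or.inr (Or.inl ⟨(g, y, x), show 2 ≤ g ∧ 1 ≤ y ∧ y < x ∧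
            ¬ IsPerfectPow g ∧ g ^ x + g ^ y = d from ⟨hg, hy, hyx, hgp, by omega⟩, rfl⟩)))
      · -- (-,-) : f2
        have hN : g ^ x = g ^ y + d := by omega
        have hyx : y < x := (Nat.pow_lt_pow_iff_right (by omega : 1 < g)).1 (by omega)
        exact Or.inr (Or.inl ⟨(g, y, x), ⟨hg, hy, hyx, hgp, hN⟩, rfl⟩)
  · intro h
    rcases h with hA | hR
    · simp only [Aset, Set.mem_insert_iff, Set.mem_singleton_iff, Prod.ext_iff] at hA
      rcases hA with ⟨rfl, rfl⟩ | ⟨rfl, rfl⟩ | ⟨rfl, rfl⟩ | ⟨rfl, rfl⟩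
      · exact ⟨(multdep_iff _ _).2 ⟨by omega, by omega, Or.inl rfl⟩, by omega⟩
      · exact ⟨(multdep_iff _ _).2 ⟨by omega, by omega, Or.inl rfl⟩, by omega⟩
      · exact ⟨(multdep_iff _ _).2 ⟨by omega, by omega, Or.inr (Or.inl rfl)⟩, by omega⟩
      · exact ⟨(multdep_iff _ _).2 ⟨by omega, by omega, Or.inr (Or.inl rfl)⟩, by omega⟩
    · rcases hR with ⟨⟨g,x,y⟩, hT, hfe⟩ | ⟨⟨g,x,y⟩, hT, hfe⟩ | ⟨⟨g,x,y⟩, hT, hfe⟩ |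
        ⟨⟨g,x,y⟩, hT, hfe⟩ | hE
      · obtain ⟨hg, hx, hxy, hgp, hN⟩ : 2 ≤ g ∧ 1 ≤ x ∧ x < y ∧ ¬ IsPerfectPow g ∧
          g ^ y = g ^ x + d := hT
        obtain ⟨rfl, rfl⟩ : a = ((g^x : ℕ) : ℤ) ∧ b = ((g^y : ℕ) : ℤ) :=
          ⟨(congrArg Prod.fst hfe).symm, (congrArg Prod.snd hfe).symm⟩
        have h1 := pow_ge hg hx
        have h2 := pow_ge hg (show 1 ≤ y by omega)
        refine ⟨(multdep_iff _ _).2 ⟨by omega, by omega, Or.inr (Or.inr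
          ⟨g, x, y, hg, hx, by omega, hgp, by rw [Int.natAbs_natCast], by rw [Int.natAbs_natCast]⟩)⟩,
          by omega⟩
      · obtain ⟨hg, hx, hxy, hgp, hN⟩ : 2 ≤ g ∧ 1 ≤ x ∧ x < y ∧ ¬ IsPerfectPow g ∧
          g ^ y = g ^ x + d := hT
        obtain ⟨rfl, rfl⟩ : a = -((g^y : ℕ) : ℤ) ∧ b = -((g^x : ℕ) : ℤ) :=
          ⟨(congrArg Prod.fst hfe).symm, (congrArg Prod.snd hfe).symm⟩
        have h1 := pow_ge hg hx
        have h2 := pow_ge hg (show 1 ≤ y by omega)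
        refine ⟨(multdep_iff _ _).2 ⟨by omega, by omega, Or.inr (Or.inr
          ⟨g, y, x, hg, by omega, hx, hgp, by rw [Int.natAbs_neg, Int.natAbs_natCast],
            by rw [Int.natAbs_neg, Int.natAbs_natCast]⟩)⟩, by omega⟩
      · obtain ⟨hg, hx, hxy, hgp, hN⟩ : 2 ≤ g ∧ 1 ≤ x ∧ x < y ∧ ¬ IsPerfectPow g ∧
          g ^ y + g ^ x = d := hT
        obtain ⟨rfl, rfl⟩ : a = -((g^x : ℕ) : ℤ) ∧ b = ((g^y : ℕ) : ℤ) :=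
          ⟨(congrArg Prod.fst hfe).symm, (congrArg Prod.snd hfe).symm⟩
        have h1 := pow_ge hg hx
        have h2 := pow_ge hg (show 1 ≤ y by omega)
        refine ⟨(multdep_iff _ _).2 ⟨by omega, by omega, Or.inr (Or.inr
          ⟨g, x, y, hg, hx, by omega, hgp, by rw [Int.natAbs_neg, Int.natAbs_natCast],
            by rw [Int.natAbs_natCast]⟩)⟩, by omega⟩
      · obtain ⟨hg, hx, hxy, hgp, hN⟩ : 2 ≤ g ∧ 1 ≤ x ∧ x < y ∧ ¬ IsPerfectPow g ∧
          g ^ y + g ^ x = d := hT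
        obtain ⟨rfl, rfl⟩ : a = -((g^y : ℕ) : ℤ) ∧ b = ((g^x : ℕ) : ℤ) :=
          ⟨(congrArg Prod.fst hfe).symm, (congrArg Prod.snd hfe).symm⟩
        have h1 := pow_ge hg hx
        have h2 := pow_ge hg (show 1 ≤ y by omega)
        refine ⟨(multdep_iff _ _).2 ⟨by omega, by omega, Or.inr (Or.inr
          ⟨g, y, x, hg, by omega, hx, hgp, by rw [Int.natAbs_neg, Int.natAbs_natCast],
            by rw [Int.natAbs_natCast]⟩)⟩, by omega⟩
      · by_cases hev : Even d
        · rw [Eset, if_pos hev, Set.mem_singleton_iff, Prod.ext_iff] at hE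
          obtain ⟨rfl, rfl⟩ : a = -((d/2 : ℕ) : ℤ) ∧ b = ((d/2 : ℕ) : ℤ) := hE
          have hd2 : 2 ≤ d / 2 := by obtain ⟨k, hk⟩ := hev; omega
          obtain ⟨g, x, hg, hx, hgp, hgx⟩ := pp_exists (d/2) hd2
          have h1 : 2 ≤ d / 2 := hd2
          refine ⟨(multdep_iff _ _).2 ⟨by omega, by omega, Or.inr (Or.inr
            ⟨g, x, x, hg, hx, hx, hgp, by rw [Int.natAbs_neg, Int.natAbs_natCast]; exact hgx,
              by rw [Int.natAbs_natCast]; exact hgx⟩)⟩, ?_⟩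
          obtain ⟨k, hk⟩ := hev
          omega
        · rw [Eset, if_neg hev] at hE
          exact absurd hE (Set.notMem_empty _)

lemma f1_sign {d : ℕ} {p : ℤ × ℤ} (hp : p ∈ f1 '' SMset d) : 2 ≤ p.1 ∧ 2 ≤ p.2 := by
  obtain ⟨⟨g, x, y⟩, hT, rfl⟩ := hp
  obtain ⟨hg, hx, hxy, -, -⟩ : 2 ≤ g ∧ 1 ≤ x ∧ x < y ∧ ¬ IsPerfectPow g ∧
    g ^ y = g ^ x + d := hT
  have h1 := pow_ge hg hx
  have h2 := pow_ge hg (show 1 ≤ y by omega)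
  constructor <;> simp only [f1] <;> exact_mod_cast ‹_›
  

lemma f2_sign {d : ℕ} {p : ℤ × ℤ} (hp : p ∈ f2 '' SMset d) : p.1 ≤ -2 ∧ p.2 ≤ -2 := by
  obtain ⟨⟨g, x, y⟩, hT, rfl⟩ := hp
  obtain ⟨hg, hx, hxy, -, -⟩ : 2 ≤ g ∧ 1 ≤ x ∧ x < y ∧ ¬ IsPerfectPow g ∧
    g ^ y = g ^ x + d := hT
  have h1 := pow_ge hg hx
  have h2 := pow_ge hg (show 1 ≤ y by omega)
  constructor <;> simp only [f2] <;> omega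

lemma f3_sign {d : ℕ} {p : ℤ × ℤ} (hp : p ∈ f3 '' SPset d) :
    p.1 ≤ -2 ∧ 2 ≤ p.2 ∧ 0 < p.1 + p.2 := by
  obtain ⟨⟨g, x, y⟩, hT, rfl⟩ := hp
  obtain ⟨hg, hx, hxy, -, -⟩ : 2 ≤ g ∧ 1 ≤ x ∧ x < y ∧ ¬ IsPerfectPow g ∧
    g ^ y + g ^ x = d := hT
  have h1 := pow_ge hg hx
  have h2 := pow_ge hg (show 1 ≤ y by omega)
  have h3 : g ^ x < g ^ y := (Nat.pow_lt_pow_iff_right (by omega)).2 hxy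
  refine ⟨?_, ?_, ?_⟩ <;> simp only [f3] <;> omega

lemma f4_sign {d : ℕ} {p : ℤ × ℤ} (hp : p ∈ f4 '' SPset d) :
    p.1 ≤ -2 ∧ 2 ≤ p.2 ∧ p.1 + p.2 < 0 := by
  obtain ⟨⟨g, x, y⟩, hT, rfl⟩ := hp
  obtain ⟨hg, hx, hxy, -, -⟩ : 2 ≤ g ∧ 1 ≤ x ∧ x < y ∧ ¬ IsPerfectPow g ∧
    g ^ y + g ^ x = d := hT
  have h1 := pow_ge hg hx
  have h2 := pow_ge hg (show 1 ≤ y by omega)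
  have h3 : g ^ x < g ^ y := (Nat.pow_lt_pow_iff_right (by omega)).2 hxy
  refine ⟨?_, ?_, ?_⟩ <;> simp only [f4] <;> omega

lemma E_sign {d : ℕ} (hd : 3 ≤ d) {p : ℤ × ℤ} (hp : p ∈ Eset d) :
    p.1 ≤ -2 ∧ 2 ≤ p.2 ∧ p.1 + p.2 = 0 := by
  by_cases hev : Even d
  · rw [Eset, if_pos hev, Set.mem_singleton_iff] at hp
    subst hp
    obtain ⟨k, hk⟩ := hev
    refine ⟨?_, ?_, ?_⟩ <;> simp only <;> omega
  · rw [Eset, if_neg hev] at hp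
    exact absurd hp (Set.notMem_empty _)

lemma Aset_card {d : ℕ} (hd : 3 ≤ d) : (Aset d).ncard = 4 := by
  rw [Aset]
  rw [Set.ncard_insert_of_notMem (by intro h; simp [Prod.ext_iff] at h; omega)
    (((Set.finite_singleton _).insert _).insert _)]
  rw [Set.ncard_insert_of_notMem (by intro h; simp [Prod.ext_iff] at h; omega)
    ((Set.finite_singleton _).insert _)]
  rw [Set.ncard_insert_of_notMem (by intro h; simp [Prod.ext_iff] at h)
    (Set.finite_singleton _)]
  rw [Set.ncard_singleton]

lemma Aset_finite (d : ℕ) : (Aset d).Finite :=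
  (((Set.finite_singleton _).insert _).insert _).insert _

lemma Eset_finite (d : ℕ) : (Eset d).Finite := by
  rw [Eset]; split_ifs
  · exact Set.finite_singleton _
  · exact Set.finite_empty

lemma Eset_card (d : ℕ) : (Eset d).ncard = if Even d then 1 else 0 := by
  rw [Eset]; split_ifs
  · exact Set.ncard_singleton _
  · exact Set.ncard_empty _

theorem stmt4 (d : ℕ) (hd : 3 ≤ d) :
    M (d : ℤ) = 2 * Nplus d + 2 * Nminus d + 4 + (if Even d then 1 else 0) := by
  have hNp : Nplus d = (SPset d).ncard := rfl
  have hNm : Nminus d = (SMset d).ncard := rfl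
  have finB1 : (f1 '' SMset d).Finite := (SM_finite d).image _
  have finB2 : (f2 '' SMset d).Finite := (SM_finite d).image _
  have finB3 : (f3 '' SPset d).Finite := (SP_finite d).image _
  have finB4 : (f4 '' SPset d).Finite := (SP_finite d).image _
  have finE := Eset_finite d
  have dis12 : Disjoint (f1 '' SMset d) (f2 '' SMset d) := Set.disjoint_left.2
    fun p h1 h2 => by have := f1_sign h1; have := f2_sign h2; omega
  have dis13 : Disjoint (f1 '' SMset d) (f3 '' SPset d) := Set.disjoint_left.2
    fun p h1 h2 => by have := f1_sign h1; have := f3_sign h2; omega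
  have dis14 : Disjoint (f1 '' SMset d) (f4 '' SPset d) := Set.disjoint_left.2
    fun p h1 h2 => by have := f1_sign h1; have := f4_sign h2; omega
  have dis1E : Disjoint (f1 '' SMset d) (Eset d) := Set.disjoint_left.2
    fun p h1 h2 => by have := f1_sign h1; have := E_sign hd h2; omega
  have dis23 : Disjoint (f2 '' SMset d) (f3 '' SPset d) := Set.disjoint_left.2
    fun p h1 h2 => by have := f2_sign h1; have := f3_sign h2; omega
  have dis24 : Disjoint (f2 '' SMset d) (f4 '' SPset d) := Set.disjoint_left.2
    fun p h1 h2 => by have := f2_sign h1; have := f4_sign h2; omega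
  have dis2E : Disjoint (f2 '' SMset d) (Eset d) := Set.disjoint_left.2
    fun p h1 h2 => by have := f2_sign h1; have := E_sign hd h2; omega
  have dis34 : Disjoint (f3 '' SPset d) (f4 '' SPset d) := Set.disjoint_left.2
    fun p h1 h2 => by have := f3_sign h1; have := f4_sign h2; omega
  have dis3E : Disjoint (f3 '' SPset d) (Eset d) := Set.disjoint_left.2
    fun p h1 h2 => by have := f3_sign h1; have := E_sign hd h2; omega
  have dis4E : Disjoint (f4 '' SPset d) (Eset d) := Set.disjoint_left.2
    fun p h1 h2 => by have := f4_sign h1; have := E_sign hd h2; omega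
  have disAR : Disjoint (Aset d) (Rest d) := Set.disjoint_left.2 fun p hA hR => by
    have hAfact : p.1 = 1 ∨ p.1 = -1 ∨ p.2 = 1 ∨ p.2 = -1 := by
      simp only [Aset, Set.mem_insert_iff, Set.mem_singleton_iff, Prod.ext_iff] at hA
      rcases hA with ⟨h, -⟩ | ⟨h, -⟩ | ⟨-, h⟩ | ⟨-, h⟩
      · exact Or.inl h
      · exact Or.inr (Or.inl h)
      · exact Or.inr (Or.inr (Or.inl h))
      · exact Or.inr (Or.inr (Or.inr h))
    have hRfact : (p.1 ≤ -2 ∨ 2 ≤ p.1) ∧ (p.2 ≤ -2 ∨ 2 ≤ p.2) := by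
      simp only [Rest, Set.mem_union] at hR
      rcases hR with h | h | h | h | h
      · have := f1_sign h; omega
      · have := f2_sign h; omega
      · have := f3_sign h; omega
      · have := f4_sign h; omega
      · have := E_sign hd h; omega
    omega
  rw [M, MSet_eq d hd]
  rw [Set.ncard_union_eq disAR (Aset_finite d)
    (finB1.union (finB2.union (finB3.union (finB4.union finE))))]
  rw [show Rest d = f1 '' SMset d ∪ (f2 '' SMset d ∪ (f3 '' SPset d ∪ (f4 '' SPset d ∪ Eset d)))
    from rfl]
  rw [Set.ncard_union_eq (Set.disjoint_union_right.2 ⟨dis12, Set.disjoint_union_right.2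
    ⟨dis13, Set.disjoint_union_right.2 ⟨dis14, dis1E⟩⟩⟩) finB1
    (finB2.union (finB3.union (finB4.union finE)))]
  rw [Set.ncard_union_eq (Set.disjoint_union_right.2 ⟨dis23, Set.disjoint_union_right.2
    ⟨dis24, dis2E⟩⟩) finB2 (finB3.union (finB4.union finE))]
  rw [Set.ncard_union_eq (Set.disjoint_union_right.2 ⟨dis34, dis3E⟩) finB3
    (finB4.union finE)]
  rw [Set.ncard_union_eq dis4E finB4 finE]
  rw [Set.ncard_image_of_injOn f1_inj, Set.ncard_image_of_injOn f2_inj,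
    Set.ncard_image_of_injOn f3_inj, Set.ncard_image_of_injOn f4_inj]
  rw [Aset_card hd, Eset_card, hNp, hNm]
  split_ifs <;> ring
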